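/- Fix m > 0 and l ∈ ℝ. On the slit plane ℂ ∖ (−∞, 0], with r = |z| and φ = Arg z ∈ (−π, π), define w_l(z) = (e^{i(l−1/2)φ} I_{l−1/2}(mr), e^{i(l+1/2)φ} I_{l+1/2}(mr)) and w*_l(z) = (e^{−i(l+1/2)φ} I_{l+1/2}(mr), e^{−i(l−1/2)φ} I_{l−1/2}(mr)). Then w_l and w*_l are real-differentiable on the slit plane and satisfy ∂_z w_l = (m/2) w_{l−1}, ∂_z̄ w_l = (m/2) w_{l+1}, ∂_z w*_l = (m/2) w*_{l+1}, and ∂_z̄ w*_l = (m/2) w*_{l−1} componentwise; in particular each w_l and each w*_l solves the Dirac equation ∂_z ψ₂ = (m/2)ψ₁, ∂_z̄ ψ₁ = (m/2)ψ₂. -/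

import Mathlib

open Complex

/-- Modified Bessel function of the first kind,
`I_ν(x) = ∑_{k=0}^∞ (x/2)^{2k+ν}/(k! Γ(k+ν+1))`; terms where `1/Γ` is evaluated at a pole of
`Γ` vanish (Mathlib's `Real.Gamma` is `0` at the poles, so the division yields `0`). -/
noncomputable def besselI (ν : ℝ) (x : ℝ) : ℝ :=
  ∑' k : ℕ, (x / 2) ^ (2 * (k : ℝ) + ν) / ((k.factorial : ℝ) * Real.Gamma ((k : ℝ) + ν + 1))

/-- Wirtinger derivative `∂_z f = (1/2)(∂_x f − i ∂_y f)`. -/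
noncomputable def wirtDz (f : ℂ → ℂ) (z : ℂ) : ℂ :=
  (1 / 2 : ℂ) * (fderiv ℝ f z 1 - Complex.I * fderiv ℝ f z Complex.I)

/-- Conjugate Wirtinger derivative `∂_z̄ f = (1/2)(∂_x f + i ∂_y f)`. -/
noncomputable def wirtDzbar (f : ℂ → ℂ) (z : ℂ) : ℂ :=
  (1 / 2 : ℂ) * (fderiv ℝ f z 1 + Complex.I * fderiv ℝ f z Complex.I)

/-- First component of `w_l(z) = (e^{i(l−1/2)φ} I_{l−1/2}(mr), e^{i(l+1/2)φ} I_{l+1/2}(mr))`,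
`r = |z|`, `φ = Arg z`. -/
noncomputable def wSol₁ (m l : ℝ) (z : ℂ) : ℂ :=
  Complex.exp (Complex.I * ((l - 1 / 2 : ℝ) : ℂ) * (z.arg : ℂ)) *
    (besselI (l - 1 / 2) (m * ‖z‖) : ℝ)

/-- Second component of `w_l`. -/
noncomputable def wSol₂ (m l : ℝ) (z : ℂ) : ℂ :=
  Complex.exp (Complex.I * ((l + 1 / 2 : ℝ) : ℂ) * (z.arg : ℂ)) *
    (besselI (l + 1 / 2) (m * ‖z‖) : ℝ)

/-- First component of `w*_l(z) = (e^{−i(l+1/2)φ} I_{l+1/2}(mr), e^{−i(l−1/2)φ} I_{l−1/2}(mr))`. -/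
noncomputable def wStar₁ (m l : ℝ) (z : ℂ) : ℂ :=
  Complex.exp (-Complex.I * ((l + 1 / 2 : ℝ) : ℂ) * (z.arg : ℂ)) *
    (besselI (l + 1 / 2) (m * ‖z‖) : ℝ)

/-- Second component of `w*_l`. -/
noncomputable def wStar₂ (m l : ℝ) (z : ℂ) : ℂ :=
  Complex.exp (-Complex.I * ((l - 1 / 2 : ℝ) : ℂ) * (z.arg : ℂ)) *
    (besselI (l - 1 / 2) (m * ‖z‖) : ℝ)

/-! ### Auxiliary material -/

noncomputable def cc (m ν : ℝ) (k : ℕ) : ℝ :=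
  (m / 2) ^ (2 * (k : ℝ) + ν) / ((k.factorial : ℝ) * Real.Gamma ((k : ℝ) + ν + 1))

noncomputable def AF (m ν : ℝ) (t : ℂ) : ℂ := ∑' k : ℕ, (cc m ν k : ℂ) * t ^ k

noncomputable def fSol (m ν : ℝ) (z : ℂ) : ℂ :=
  Complex.exp (Complex.I * (ν : ℂ) * (z.arg : ℂ)) * ((besselI ν (m * ‖z‖) : ℝ) : ℂ)

lemma cc_succ (m ν : ℝ) (hm : 0 < m) (k : ℕ) :
    cc m ν (k + 1) * ((k : ℝ) + 1) = (m / 2) * cc m (ν + 1) k := by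
  have hm2 : (0:ℝ) < m / 2 := by linarith
  unfold cc
  have he : (2 * ((k:ℕ)+1 : ℕ) + ν : ℝ) = (2 * (k:ℝ) + (ν+1)) + 1 := by push_cast; ring
  have hg : ((((k:ℕ)+1 : ℕ) : ℝ) + ν + 1) = ((k:ℝ) + (ν+1) + 1) := by push_cast; ring
  rw [hg]
  have hpow : (m/2) ^ (2 * (((k:ℕ)+1 : ℕ)) + ν : ℝ) = (m/2) ^ (2*(k:ℝ) + (ν+1)) * (m/2) := by
    rw [he, Real.rpow_add hm2, Real.rpow_one]
  rw [hpow, Nat.factorial_succ]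
  rcases eq_or_ne (Real.Gamma ((k:ℝ) + (ν+1) + 1)) 0 with h | h
  · simp [h]
  · have hk : ((k:ℝ) + 1) ≠ 0 := by positivity
    have hf : ((k.factorial : ℝ)) ≠ 0 := by positivity
    push_cast
    field_simp

-- identity A
lemma cc_mul (m ν : ℝ) (hm : 0 < m) (k : ℕ) :
    ((k : ℝ) + ν) * cc m ν k = (m / 2) * cc m (ν - 1) k := by
  have hm2 : (0:ℝ) < m / 2 := by linarith
  unfold cc
  have hg : ((k:ℝ) + (ν - 1) + 1) = ((k:ℝ) + ν) := by ring
  rw [hg]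
  have hpow : (m/2) ^ (2 * (k:ℝ) + ν) = (m/2) ^ (2*(k:ℝ) + (ν-1)) * (m/2) := by
    rw [show (2*(k:ℝ) + ν) = (2*(k:ℝ) + (ν-1)) + 1 by ring, Real.rpow_add hm2, Real.rpow_one]
  rcases eq_or_ne ((k:ℝ) + ν) 0 with h | h
  · rw [h]
    simp [Real.Gamma_zero]
  · rw [show (k:ℝ) + ν + 1 = ((k:ℝ)+ν) + 1 by ring, Real.Gamma_add_one h, hpow]
    rcases eq_or_ne (Real.Gamma ((k:ℝ) + ν)) 0 with h2 | h2
    · simp [h2]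
    · have hf : ((k.factorial : ℝ)) ≠ 0 := by positivity
      field_simp

-- master summability
lemma summable_cc (m ν : ℝ) (hm : 0 < m) (R : ℝ) (hR : 0 ≤ R) :
    Summable (fun k : ℕ => |cc m ν k| * ((k : ℝ) + 1) * R ^ k) := by
  have hm2 : (0:ℝ) < m / 2 := by linarith
  set q : ℝ := (m/2) ^ (2:ℝ) with hq
  have hq0 : 0 < q := Real.rpow_pos_of_pos hm2 2
  have hsum : Summable (fun k : ℕ => (m/2) ^ ν * (2 * (q * R)) ^ k / (k.factorial : ℝ)) := by
    simpa [mul_div_assoc] using (Real.summable_pow_div_factorial (2 * (q * R))).mul_left ((m/2) ^ ν)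
  apply Summable.of_norm_bounded_eventually_nat hsum
  obtain ⟨N, hN⟩ := exists_nat_ge (1 - ν)
  filter_upwards [Filter.eventually_ge_atTop N] with k hk
  have hkν : (2:ℝ) ≤ (k:ℝ) + ν + 1 := by
    have : (N:ℝ) ≤ (k:ℝ) := by exact_mod_cast hk
    linarith
  have hΓ : (1:ℝ) ≤ Real.Gamma ((k:ℝ) + ν + 1) := by
    have h2 : Real.Gamma 2 ≤ Real.Gamma ((k:ℝ) + ν + 1) :=
      Real.Gamma_strictMonoOn_Ici.monotoneOn Set.self_mem_Ici hkν hkν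
    rwa [Real.Gamma_two] at h2
  have hcc : |cc m ν k| ≤ (m/2) ^ ν * q ^ k / (k.factorial : ℝ) := by
    unfold cc
    rw [abs_div, _root_.abs_of_pos (Real.rpow_pos_of_pos hm2 _)]
    have hd : (k.factorial : ℝ) ≤ |(k.factorial : ℝ) * Real.Gamma ((k:ℝ) + ν + 1)| := by
      rw [abs_mul, _root_.abs_of_pos (by positivity : (0:ℝ) < (k.factorial:ℝ))]
      nth_rewrite 1 [← mul_one (k.factorial : ℝ)]
      exact mul_le_mul_of_nonneg_left (le_trans hΓ (le_abs_self _)) (by positivity)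
    calc (m/2) ^ (2*(k:ℝ)+ν) / |(k.factorial : ℝ) * Real.Gamma ((k:ℝ) + ν + 1)|
        ≤ (m/2) ^ (2*(k:ℝ)+ν) / (k.factorial : ℝ) := by
          exact div_le_div_of_nonneg_left (by positivity) (by positivity) hd
      _ = (m/2) ^ ν * q ^ k / (k.factorial : ℝ) := by
          rw [show (2*(k:ℝ)+ν) = ν + (2:ℝ)*(k:ℝ) by ring, Real.rpow_add hm2, hq,
            ← Real.rpow_natCast ((m/2)^(2:ℝ)) k, ← Real.rpow_mul (le_of_lt hm2)]
  have hk2 : ((k:ℝ) + 1) ≤ 2 ^ k := by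
    exact_mod_cast Nat.lt_two_pow_self (n := k)
  have habs : 0 ≤ |cc m ν k| := abs_nonneg _
  rw [Real.norm_eq_abs, _root_.abs_of_nonneg (by positivity)]
  calc |cc m ν k| * ((k:ℝ)+1) * R ^ k
      ≤ ((m/2) ^ ν * q ^ k / (k.factorial : ℝ)) * (2:ℝ) ^ k * R ^ k := by
        apply mul_le_mul_of_nonneg_right _ (by positivity)
        exact mul_le_mul hcc hk2 (by positivity) (by positivity)
    _ = (m/2) ^ ν * (2 * (q * R)) ^ k / (k.factorial : ℝ) := by
        rw [mul_pow, mul_pow]; ring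

lemma summable_AF (m ν : ℝ) (hm : 0 < m) (t : ℂ) :
    Summable (fun k : ℕ => (cc m ν k : ℂ) * t ^ k) := by
  apply Summable.of_norm_bounded (summable_cc m ν hm ‖t‖ (norm_nonneg t))
  intro k
  rw [norm_mul, norm_pow, Complex.norm_real, Real.norm_eq_abs]
  have h1 : ‖t‖ ^ k ≤ ((k:ℝ) + 1) * ‖t‖ ^ k := by
    nth_rewrite 1 [← one_mul (‖t‖ ^ k)]
    apply mul_le_mul_of_nonneg_right (by linarith [Nat.cast_nonneg (α := ℝ) k]) (by positivity)
  calc |cc m ν k| * ‖t‖ ^ k ≤ |cc m ν k| * (((k:ℝ)+1) * ‖t‖ ^ k) :=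
        mul_le_mul_of_nonneg_left h1 (abs_nonneg _)
    _ = |cc m ν k| * ((k:ℝ)+1) * ‖t‖ ^ k := by ring

lemma summable_AF' (m ν : ℝ) (hm : 0 < m) (t : ℂ) :
    Summable (fun k : ℕ => (cc m ν k : ℂ) * ((k : ℂ) * t ^ (k - 1))) := by
  apply Summable.of_norm_bounded (summable_cc m ν hm (‖t‖ + 1) (by positivity))
  intro k
  rw [norm_mul, norm_mul, norm_pow, Complex.norm_real, Real.norm_eq_abs, Complex.norm_natCast]
  have h1 : (k:ℝ) * ‖t‖ ^ (k-1) ≤ ((k:ℝ) + 1) * (‖t‖+1) ^ k := by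
    apply mul_le_mul (by linarith) _ (by positivity) (by positivity)
    calc ‖t‖ ^ (k-1) ≤ (‖t‖+1) ^ (k-1) := pow_le_pow_left₀ (norm_nonneg t) (by linarith) _
      _ ≤ (‖t‖+1) ^ k := pow_le_pow_right₀ (by linarith [norm_nonneg t]) (Nat.sub_le k 1)
  calc |cc m ν k| * ((k:ℝ) * ‖t‖ ^ (k-1)) ≤ |cc m ν k| * (((k:ℝ)+1) * (‖t‖+1) ^ k) :=
        mul_le_mul_of_nonneg_left h1 (abs_nonneg _)
    _ = |cc m ν k| * ((k:ℝ)+1) * (‖t‖+1) ^ k := by ring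

lemma cc_succ' (m ν : ℝ) (hm : 0 < m) (k : ℕ) :
    (cc m ν (k + 1) : ℂ) * ((k : ℂ) + 1) = ((m : ℂ) / 2) * (cc m (ν + 1) k : ℂ) := by
  have := cc_succ m ν hm k
  have h2 : ((cc m ν (k+1) * ((k:ℝ)+1) : ℝ) : ℂ) = (((m/2) * cc m (ν+1) k : ℝ) : ℂ) := by
    exact_mod_cast congrArg Complex.ofReal this
  push_cast at h2
  push_cast
  linear_combination h2

lemma tsum_shift (m ν : ℝ) (hm : 0 < m) (t : ℂ) :
    (∑' k : ℕ, (cc m ν k : ℂ) * ((k : ℂ) * t ^ (k - 1))) = (m / 2 : ℂ) * AF m (ν + 1) t := by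
  rw [Summable.tsum_eq_zero_add (summable_AF' m ν hm t)]
  simp only [Nat.cast_zero, zero_mul, mul_zero, zero_add]
  unfold AF
  rw [← tsum_mul_left]
  apply tsum_congr
  intro k
  have h := cc_succ' m ν hm k
  push_cast
  linear_combination t ^ k * h

lemma hasDerivAt_AF (m ν : ℝ) (hm : 0 < m) (t : ℂ) :
    HasDerivAt (AF m ν) ((m / 2 : ℂ) * AF m (ν + 1) t) t := by
  set R : ℝ := ‖t‖ + 1 with hR
  have hR1 : (1:ℝ) ≤ R := by rw [hR]; linarith [norm_nonneg t]
  have key : HasDerivAt (fun y => ∑' k : ℕ, (cc m ν k : ℂ) * y ^ k)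
      (∑' k : ℕ, (cc m ν k : ℂ) * ((k : ℂ) * t ^ (k - 1))) t := by
    apply hasDerivAt_tsum_of_isPreconnected (summable_cc m ν hm R (by positivity))
      Metric.isOpen_ball (convex_ball (0:ℂ) R).isPreconnected
      (fun k y _ => ((hasDerivAt_pow k y).const_mul ((cc m ν k : ℂ))))
      _ (Metric.mem_ball_self (by linarith)) (summable_AF m ν hm 0)
      (by rw [Metric.mem_ball, dist_zero_right, hR]; linarith)
    intro k y hy
    rw [Metric.mem_ball, dist_zero_right] at hy
    rw [norm_mul, norm_mul, norm_pow, Complex.norm_real, Real.norm_eq_abs, Complex.norm_natCast]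
    have h1 : (k:ℝ) * ‖y‖ ^ (k-1) ≤ ((k:ℝ) + 1) * R ^ k := by
      apply mul_le_mul (by linarith) _ (by positivity) (by positivity)
      calc ‖y‖ ^ (k-1) ≤ R ^ (k-1) := pow_le_pow_left₀ (norm_nonneg y) (le_of_lt hy) _
        _ ≤ R ^ k := pow_le_pow_right₀ hR1 (Nat.sub_le k 1)
    calc |cc m ν k| * ((k:ℝ) * ‖y‖ ^ (k-1)) ≤ |cc m ν k| * (((k:ℝ)+1) * R ^ k) :=
          mul_le_mul_of_nonneg_left h1 (abs_nonneg _)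
      _ = |cc m ν k| * ((k:ℝ)+1) * R ^ k := by ring
  rw [← tsum_shift m ν hm t]
  exact key

lemma AF_rec (m ν : ℝ) (hm : 0 < m) (t : ℂ) :
    (m / 2 : ℂ) * AF m (ν - 1) t = (ν : ℂ) * AF m ν t + (m / 2 : ℂ) * t * AF m (ν + 1) t := by
  unfold AF
  rw [← tsum_mul_left, ← tsum_mul_left]
  have h1 : ∀ k : ℕ, (m/2 : ℂ) * ((cc m (ν-1) k : ℂ) * t ^ k)
      = (((k:ℂ) + ν) * (cc m ν k : ℂ)) * t ^ k := by
    intro k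
    have := cc_mul m ν hm k
    have h2 : ((((k:ℝ) + ν) * cc m ν k : ℝ) : ℂ) = (((m/2) * cc m (ν-1) k : ℝ) : ℂ) :=
      congrArg Complex.ofReal this
    push_cast at h2
    linear_combination t ^ k * h2.symm
  rw [tsum_congr h1]
  have hsplit : ∀ k : ℕ, (((k:ℂ) + ν) * (cc m ν k : ℂ)) * t ^ k
      = (ν:ℂ) * ((cc m ν k : ℂ) * t ^ k) + (cc m ν k : ℂ) * ((k:ℂ) * t ^ (k-1)) * t := by
    intro k
    cases k with
    | zero => simp
    | succ n =>
      rw [Nat.add_sub_cancel]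
      push_cast
      ring
  rw [tsum_congr hsplit, Summable.tsum_add ((summable_AF m ν hm t).mul_left _)
    ((summable_AF' m ν hm t).mul_right t)]
  rw [tsum_mul_right, tsum_shift m ν hm t, tsum_mul_left]
  unfold AF
  ring

lemma repr_fSol (m ν : ℝ) (hm : 0 < m) {z : ℂ} (hz : z ∈ Complex.slitPlane) :
    fSol m ν z = z ^ (ν : ℂ) * AF m ν (z * (starRingEnd ℂ) z) := by
  have hz0 : z ≠ 0 := Complex.slitPlane_ne_zero hz
  have habs : 0 < ‖z‖ := norm_pos_iff.mpr hz0
  have hm2 : (0:ℝ) < m / 2 := by linarith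
  -- step 1: rewrite besselI as (∑ cc * (|z|^2)^k) * |z|^ν
  have hbessel : besselI ν (m * ‖z‖)
      = (∑' k : ℕ, cc m ν k * ((‖z‖ ^ 2) ^ k)) * (‖z‖) ^ ν := by
    unfold besselI
    rw [← tsum_mul_right]
    apply tsum_congr
    intro k
    have h1 : (m * ‖z‖ / 2) = (m / 2) * ‖z‖ := by ring
    rw [h1, Real.mul_rpow (le_of_lt hm2) (le_of_lt habs)]
    have h2 : (‖z‖) ^ (2 * (k:ℝ) + ν)
        = (‖z‖ ^ 2) ^ k * (‖z‖) ^ ν := by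
      rw [Real.rpow_add habs, show (2 * (k:ℝ)) = ((2 * k : ℕ) : ℝ) by push_cast; ring,
        Real.rpow_natCast, pow_mul]
    rw [h2]
    unfold cc
    ring
  -- step 2: the cpow
  have hcpow : z ^ (ν : ℂ) = Complex.exp (Complex.I * (ν : ℂ) * (z.arg : ℂ))
      * ((‖z‖ ^ ν : ℝ) : ℂ) := by
    rw [Complex.cpow_def_of_ne_zero hz0]
    have hlog : Complex.log z = (Real.log (‖z‖) : ℂ) + (z.arg : ℂ) * Complex.I := by
      rfl
    rw [hlog, add_mul, Complex.exp_add]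
    have e1 : Complex.exp ((Real.log (‖z‖) : ℂ) * (ν:ℂ))
        = ((‖z‖ ^ ν : ℝ) : ℂ) := by
      rw [Real.rpow_def_of_pos habs, Complex.ofReal_exp, Complex.ofReal_mul]
    have e2 : ((z.arg : ℂ) * Complex.I) * (ν:ℂ) = Complex.I * (ν:ℂ) * (z.arg:ℂ) := by ring
    rw [e1, e2]
    ring
  -- step 3: assemble
  unfold fSol
  rw [hbessel, hcpow]
  have hzc : z * (starRingEnd ℂ) z = ((‖z‖ ^ 2 : ℝ) : ℂ) := by
    rw [Complex.mul_conj, Complex.normSq_eq_norm_sq]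
  rw [hzc]
  unfold AF
  rw [Complex.ofReal_mul, Complex.ofReal_tsum]
  push_cast
  ring

lemma key (m ν : ℝ) (hm : 0 < m) {z : ℂ} (hz : z ∈ Complex.slitPlane) :
    DifferentiableAt ℝ (fSol m ν) z ∧
    wirtDz (fSol m ν) z = (m / 2 : ℂ) * fSol m (ν - 1) z ∧
    wirtDzbar (fSol m ν) z = (m / 2 : ℂ) * fSol m (ν + 1) z := by
  have hz0 : z ≠ 0 := Complex.slitPlane_ne_zero hz
  have hcpadd : ∀ a : ℂ, z ^ (a + 1) = z ^ a * z := fun a => by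
    rw [Complex.cpow_add _ _ hz0, Complex.cpow_one]
  have hcp1 : z ^ (ν:ℂ) = z ^ ((ν:ℂ) - 1) * z := by
    have h := hcpadd ((ν:ℂ) - 1)
    rwa [sub_add_cancel] at h
  have h1 : HasFDerivAt (fun w : ℂ => w ^ (ν:ℂ))
      (((1 : ℂ →L[ℂ] ℂ).smulRight ((ν:ℂ) * z ^ ((ν:ℂ) - 1))).restrictScalars ℝ) z :=
    ((Complex.hasStrictDerivAt_cpow_const hz).hasDerivAt.hasFDerivAt).restrictScalars ℝ
  have h2 : HasFDerivAt (fun w : ℂ => w * (starRingEnd ℂ) w)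
      (z • (Complex.conjCLE : ℂ →L[ℝ] ℂ) + ((starRingEnd ℂ) z) • ContinuousLinearMap.id ℝ ℂ) z :=
    (hasFDerivAt_id z).mul (Complex.conjCLE.hasFDerivAt)
  have h3 : HasFDerivAt (fun w : ℂ => AF m ν (w * (starRingEnd ℂ) w))
      ((((1 : ℂ →L[ℂ] ℂ).smulRight ((m/2:ℂ) * AF m (ν+1) (z * (starRingEnd ℂ) z))).restrictScalars ℝ).comp
        (z • (Complex.conjCLE : ℂ →L[ℝ] ℂ) + ((starRingEnd ℂ) z) • ContinuousLinearMap.id ℝ ℂ)) z :=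
    by have := (((hasDerivAt_AF m ν hm (z * (starRingEnd ℂ) z)).hasFDerivAt).restrictScalars ℝ).comp z h2
       rw [ContinuousLinearMap.smulRight_one_eq_toSpanSingleton]; exact this
  have hg : HasFDerivAt (fun w : ℂ => w ^ (ν:ℂ) * AF m ν (w * (starRingEnd ℂ) w))
      ((z ^ (ν:ℂ)) • ((((1 : ℂ →L[ℂ] ℂ).smulRight ((m/2:ℂ) * AF m (ν+1) (z * (starRingEnd ℂ) z))).restrictScalars ℝ).comp
        (z • (Complex.conjCLE : ℂ →L[ℝ] ℂ) + ((starRingEnd ℂ) z) • ContinuousLinearMap.id ℝ ℂ))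
       + (AF m ν (z * (starRingEnd ℂ) z)) • (((1 : ℂ →L[ℂ] ℂ).smulRight ((ν:ℂ) * z ^ ((ν:ℂ) - 1))).restrictScalars ℝ)) z :=
    HasFDerivAt.mul h1 h3
  have heq : fSol m ν =ᶠ[nhds z] (fun w => w ^ (ν:ℂ) * AF m ν (w * (starRingEnd ℂ) w)) := by
    filter_upwards [Complex.isOpen_slitPlane.mem_nhds hz] with w hw
    exact repr_fSol m ν hm hw
  have hdiff : DifferentiableAt ℝ (fSol m ν) z :=
    (hg.differentiableAt.congr_of_eventuallyEq heq)
  have hfd : fderiv ℝ (fSol m ν) z = fderiv ℝ (fun w => w ^ (ν:ℂ) * AF m ν (w * (starRingEnd ℂ) w)) z :=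
    heq.fderiv_eq
  have hone : fderiv ℝ (fSol m ν) z 1
      = z ^ (ν:ℂ) * ((z + (starRingEnd ℂ) z) * ((m/2:ℂ) * AF m (ν+1) (z * (starRingEnd ℂ) z)))
        + AF m ν (z * (starRingEnd ℂ) z) * ((ν:ℂ) * z ^ ((ν:ℂ) - 1)) := by
    rw [hfd, hg.fderiv]
    simp [ContinuousLinearMap.smulRight_apply, Complex.conjCLE_apply, smul_eq_mul]
    ring
  have hI : fderiv ℝ (fSol m ν) z Complex.I
      = z ^ (ν:ℂ) * ((z * (-Complex.I) + (starRingEnd ℂ) z * Complex.I) * ((m/2:ℂ) * AF m (ν+1) (z * (starRingEnd ℂ) z)))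
        + AF m ν (z * (starRingEnd ℂ) z) * (Complex.I * ((ν:ℂ) * z ^ ((ν:ℂ) - 1))) := by
    rw [hfd, hg.fderiv]
    simp [ContinuousLinearMap.smulRight_apply, Complex.conjCLE_apply, smul_eq_mul, Complex.conj_I]
    ring
  refine ⟨hdiff, ?_, ?_⟩
  · rw [wirtDz, hone, hI]
    have hrepr : fSol m (ν-1) z = z ^ (((ν-1:ℝ)):ℂ) * AF m (ν-1) (z * (starRingEnd ℂ) z) :=
      repr_fSol m (ν-1) hm hz
    have hcast : (((ν-1:ℝ)):ℂ) = (ν:ℂ) - 1 := by push_cast; ring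
    rw [hrepr, hcast]
    have hrec := AF_rec m ν hm (z * (starRingEnd ℂ) z)
    linear_combination (-(z ^ ((ν:ℂ)-1))) * hrec
      + ((m/2:ℂ) * AF m (ν+1) (z * (starRingEnd ℂ) z) * (starRingEnd ℂ) z) * hcp1
      + ((m/2:ℂ) * AF m (ν+1) (z * (starRingEnd ℂ) z) * z ^ (ν:ℂ) * (z - (starRingEnd ℂ) z) / 2
          - (ν:ℂ) * AF m ν (z * (starRingEnd ℂ) z) * z ^ ((ν:ℂ)-1) / 2) * Complex.I_sq
  · rw [wirtDzbar, hone, hI]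
    have hrepr : fSol m (ν+1) z = z ^ (((ν+1:ℝ)):ℂ) * AF m (ν+1) (z * (starRingEnd ℂ) z) :=
      repr_fSol m (ν+1) hm hz
    have hcast : (((ν+1:ℝ)):ℂ) = (ν:ℂ) + 1 := by push_cast; ring
    rw [hrepr, hcast, hcpadd (ν:ℂ)]
    linear_combination ((m/2:ℂ) * AF m (ν+1) (z * (starRingEnd ℂ) z) * z ^ (ν:ℂ) * ((starRingEnd ℂ) z - z) / 2
      + (ν:ℂ) * AF m ν (z * (starRingEnd ℂ) z) * z ^ ((ν:ℂ)-1) / 2) * Complex.I_sq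


lemma wirt_conj (f : ℂ → ℂ) (z : ℂ) (hf : DifferentiableAt ℝ f z) :
    DifferentiableAt ℝ (fun w => (starRingEnd ℂ) (f w)) z ∧
    wirtDz (fun w => (starRingEnd ℂ) (f w)) z = (starRingEnd ℂ) (wirtDzbar f z) ∧
    wirtDzbar (fun w => (starRingEnd ℂ) (f w)) z = (starRingEnd ℂ) (wirtDz f z) := by
  have h : HasFDerivAt (fun w => (starRingEnd ℂ) (f w))
      ((Complex.conjCLE : ℂ ≃L[ℝ] ℂ).toContinuousLinearMap.comp (fderiv ℝ f z)) z :=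
    (Complex.conjCLE.hasFDerivAt).comp z hf.hasFDerivAt
  have h1 : fderiv ℝ (fun w => (starRingEnd ℂ) (f w)) z 1
      = (starRingEnd ℂ) (fderiv ℝ f z 1) := by
    rw [h.fderiv]; simp
  have hII : fderiv ℝ (fun w => (starRingEnd ℂ) (f w)) z Complex.I
      = (starRingEnd ℂ) (fderiv ℝ f z Complex.I) := by
    rw [h.fderiv]; simp
  refine ⟨h.differentiableAt, ?_, ?_⟩
  · rw [wirtDz, wirtDzbar, h1, hII]
    simp only [map_mul, map_add, map_sub, map_div₀, map_one, map_ofNat, Complex.conj_I]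
    ring
  · rw [wirtDz, wirtDzbar, h1, hII]
    simp only [map_mul, map_add, map_sub, map_div₀, map_one, map_ofNat, Complex.conj_I]
    ring

lemma fSol_congr (m : ℝ) {a b : ℝ} (h : a = b) (z : ℂ) : fSol m a z = fSol m b z := by rw [h]

lemma wSol₁_eq (m l : ℝ) : wSol₁ m l = fSol m (l - 1 / 2) := rfl

lemma wSol₂_eq (m l : ℝ) : wSol₂ m l = fSol m (l + 1 / 2) := rfl

lemma wStar₁_eq (m l : ℝ) : wStar₁ m l = fun z => (starRingEnd ℂ) (wSol₂ m l z) := by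
  funext z
  unfold wStar₁ wSol₂
  rw [map_mul, ← Complex.exp_conj, Complex.conj_ofReal]
  congr 1
  simp only [map_mul, Complex.conj_I, Complex.conj_ofReal]

lemma wStar₂_eq (m l : ℝ) : wStar₂ m l = fun z => (starRingEnd ℂ) (wSol₁ m l z) := by
  funext z
  unfold wStar₂ wSol₁
  rw [map_mul, ← Complex.exp_conj, Complex.conj_ofReal]
  congr 1
  simp only [map_mul, Complex.conj_I, Complex.conj_ofReal]

lemma conj_half_mul (m : ℝ) (x : ℂ) :
    (starRingEnd ℂ) ((m / 2 : ℂ) * x) = (m / 2 : ℂ) * (starRingEnd ℂ) x := by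
  simp only [map_mul, map_div₀, Complex.conj_ofReal, map_ofNat]

/-- On the slit plane the local solutions `w_l`, `w*_l` are real-differentiable
and satisfy `∂_z w_l = (m/2) w_{l−1}`, `∂_z̄ w_l = (m/2) w_{l+1}`, `∂_z w*_l = (m/2) w*_{l+1}`,
`∂_z̄ w*_l = (m/2) w*_{l−1}` componentwise; in particular each solves the Dirac equation
`∂_z ψ₂ = (m/2)ψ₁`, `∂_z̄ ψ₁ = (m/2)ψ₂`. -/
theorem local_solutions_dirac (m l : ℝ) (hm : 0 < m) :
    ∀ z ∈ Complex.slitPlane,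
      (DifferentiableAt ℝ (wSol₁ m l) z ∧ DifferentiableAt ℝ (wSol₂ m l) z ∧
       DifferentiableAt ℝ (wStar₁ m l) z ∧ DifferentiableAt ℝ (wStar₂ m l) z) ∧
      (wirtDz (wSol₁ m l) z = (m / 2 : ℂ) * wSol₁ m (l - 1) z ∧
       wirtDz (wSol₂ m l) z = (m / 2 : ℂ) * wSol₂ m (l - 1) z) ∧
      (wirtDzbar (wSol₁ m l) z = (m / 2 : ℂ) * wSol₁ m (l + 1) z ∧
       wirtDzbar (wSol₂ m l) z = (m / 2 : ℂ) * wSol₂ m (l + 1) z) ∧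
      (wirtDz (wStar₁ m l) z = (m / 2 : ℂ) * wStar₁ m (l + 1) z ∧
       wirtDz (wStar₂ m l) z = (m / 2 : ℂ) * wStar₂ m (l + 1) z) ∧
      (wirtDzbar (wStar₁ m l) z = (m / 2 : ℂ) * wStar₁ m (l - 1) z ∧
       wirtDzbar (wStar₂ m l) z = (m / 2 : ℂ) * wStar₂ m (l - 1) z) ∧
      (wirtDz (wSol₂ m l) z = (m / 2 : ℂ) * wSol₁ m l z ∧
       wirtDzbar (wSol₁ m l) z = (m / 2 : ℂ) * wSol₂ m l z) ∧
      (wirtDz (wStar₂ m l) z = (m / 2 : ℂ) * wStar₁ m l z ∧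
       wirtDzbar (wStar₁ m l) z = (m / 2 : ℂ) * wStar₂ m l z) := by
  intro z hz
  obtain ⟨hd1, hDz1, hDzbar1⟩ := key m (l - 1 / 2) hm hz
  obtain ⟨hd2, hDz2, hDzbar2⟩ := key m (l + 1 / 2) hm hz
  rw [← wSol₁_eq] at hd1
  rw [← wSol₂_eq] at hd2
  obtain ⟨hcd1, hcDz1, hcDzbar1⟩ := wirt_conj (wSol₁ m l) z hd1
  obtain ⟨hcd2, hcDz2, hcDzbar2⟩ := wirt_conj (wSol₂ m l) z hd2
  -- wSol equalities
  have e1 : wirtDz (wSol₁ m l) z = (m / 2 : ℂ) * wSol₁ m (l - 1) z := by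
    rw [wSol₁_eq, hDz1, wSol₁_eq, fSol_congr m (by ring : l - 1 - 1 / 2 = l - 1 / 2 - 1)]
  have e2 : wirtDz (wSol₂ m l) z = (m / 2 : ℂ) * wSol₂ m (l - 1) z := by
    rw [wSol₂_eq, hDz2, wSol₂_eq, fSol_congr m (by ring : l - 1 + 1 / 2 = l + 1 / 2 - 1)]
  have e3 : wirtDzbar (wSol₁ m l) z = (m / 2 : ℂ) * wSol₁ m (l + 1) z := by
    rw [wSol₁_eq, hDzbar1, wSol₁_eq, fSol_congr m (by ring : l + 1 - 1 / 2 = l - 1 / 2 + 1)]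
  have e4 : wirtDzbar (wSol₂ m l) z = (m / 2 : ℂ) * wSol₂ m (l + 1) z := by
    rw [wSol₂_eq, hDzbar2, wSol₂_eq, fSol_congr m (by ring : l + 1 + 1 / 2 = l + 1 / 2 + 1)]
  have e5 : wirtDz (wSol₂ m l) z = (m / 2 : ℂ) * wSol₁ m l z := by
    rw [wSol₂_eq, hDz2, wSol₁_eq, fSol_congr m (by ring : l - 1 / 2 = l + 1 / 2 - 1)]
  have e6 : wirtDzbar (wSol₁ m l) z = (m / 2 : ℂ) * wSol₂ m l z := by
    rw [wSol₁_eq, hDzbar1, wSol₂_eq, fSol_congr m (by ring : l + 1 / 2 = l - 1 / 2 + 1)]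
  -- wStar equalities
  have f1 : wirtDz (wStar₁ m l) z = (m / 2 : ℂ) * wStar₁ m (l + 1) z := by
    rw [wStar₁_eq m l, hcDz2, e4, conj_half_mul, wStar₁_eq m (l + 1)]
  have f2 : wirtDz (wStar₂ m l) z = (m / 2 : ℂ) * wStar₂ m (l + 1) z := by
    rw [wStar₂_eq m l, hcDz1, e3, conj_half_mul, wStar₂_eq m (l + 1)]
  have f3 : wirtDzbar (wStar₁ m l) z = (m / 2 : ℂ) * wStar₁ m (l - 1) z := by
    rw [wStar₁_eq m l, hcDzbar2, e2, conj_half_mul, wStar₁_eq m (l - 1)]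
  have f4 : wirtDzbar (wStar₂ m l) z = (m / 2 : ℂ) * wStar₂ m (l - 1) z := by
    rw [wStar₂_eq m l, hcDzbar1, e1, conj_half_mul, wStar₂_eq m (l - 1)]
  have f5 : wirtDz (wStar₂ m l) z = (m / 2 : ℂ) * wStar₁ m l z := by
    rw [wStar₂_eq m l, hcDz1, e6, conj_half_mul, wStar₁_eq m l]
  have f6 : wirtDzbar (wStar₁ m l) z = (m / 2 : ℂ) * wStar₂ m l z := by
    rw [wStar₁_eq m l, hcDzbar2, e5, conj_half_mul, wStar₂_eq m l]
  have hd3 : DifferentiableAt ℝ (wStar₁ m l) z := by rw [wStar₁_eq m l]; exact hcd2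
  have hd4 : DifferentiableAt ℝ (wStar₂ m l) z := by rw [wStar₂_eq m l]; exact hcd1
  exact ⟨⟨hd1, hd2, hd3, hd4⟩, ⟨e1, e2⟩, ⟨e3, e4⟩, ⟨f1, f2⟩, ⟨f3, f4⟩, ⟨e5, e6⟩, ⟨f5, f6⟩⟩
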